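/- Let X be a compact topological space and f_{0,∞} = {f_n} a sequence of continuous self-maps of X, and let f_{i,∞} denote the shifted sequence {f_n}_{n≥i}. Then for every 1 ≤ i ≤ j and every open cover 𝒜 of X, h(f_{i,∞}, 𝒜) ≤ h(f_{j,∞}, 𝒜), and consequently h(f_{i,∞}) ≤ h(f_{j,∞}). -/

import Mathlib

open Filter Set

/-- `itr f i n = f (i+n-1) ∘ ⋯ ∘ f i`. -/
def itr {X : Type*} (f : ℕ → X → X) (i : ℕ) : ℕ → X → X
  | 0 => id
  | n + 1 => fun x => f (i + n) (itr f i n x)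

/-- The common refinement `⋁_{k<n} (f_i^k)⁻¹(𝒜)` for the shifted system `f_{i,∞}`. -/
def refCoverAt {X : Type*} (f : ℕ → X → X) (i n : ℕ) (𝒜 : Set (Set X)) : Set (Set X) :=
  {S | ∃ a : ℕ → Set X, (∀ k < n, a k ∈ 𝒜) ∧ S = ⋂ k < n, itr f i k ⁻¹' a k}

/-- Minimal cardinality of a subfamily of `𝒜` covering `X`. -/
noncomputable def coverN {X : Type*} (𝒜 : Set (Set X)) : ℕ :=
  sInf {m | ∃ B : Finset (Set X), ↑B ⊆ 𝒜 ∧ ⋃₀ (↑B : Set (Set X)) = Set.univ ∧ B.card = m}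

/-- Cover entropy of the shifted system `f_{i,∞}` relative to the open cover `𝒜`. -/
noncomputable def coverEntropyOn {X : Type*} (f : ℕ → X → X) (i : ℕ) (𝒜 : Set (Set X)) :
    EReal :=
  atTop.limsup fun n : ℕ => ((Real.log (coverN (refCoverAt f i n 𝒜)) / n : ℝ) : EReal)

/-- Topological (cover) entropy of the shifted system `f_{i,∞}`. -/
noncomputable def coverEntropy {X : Type*} [TopologicalSpace X] (f : ℕ → X → X) (i : ℕ) :
    EReal :=
  ⨆ 𝒜 ∈ {𝒜 : Set (Set X) | (∀ A ∈ 𝒜, IsOpen A) ∧ ⋃₀ 𝒜 = Set.univ},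
    coverEntropyOn f i 𝒜

section Aux

variable {X : Type*}

lemma itr_add (f : ℕ → X → X) (i m : ℕ) :
    ∀ k x, itr f i (m + k) x = itr f (i + m) k (itr f i m x)
  | 0, _ => rfl
  | k + 1, x => by
    show f (i + (m + k)) (itr f i (m + k) x) = f (i + m + k) (itr f (i + m) k (itr f i m x))
    rw [itr_add f i m k x, add_assoc]

lemma itr_continuous [TopologicalSpace X] {f : ℕ → X → X} (hf : ∀ n, Continuous (f n)) (i : ℕ) :
    ∀ n, Continuous (itr f i n)
  | 0 => continuous_id
  | n + 1 => (hf (i + n)).comp (itr_continuous hf i n)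

lemma refCoverAt_isOpen [TopologicalSpace X] {f : ℕ → X → X} (hf : ∀ n, Continuous (f n))
    {𝒜 : Set (Set X)} (h𝒜 : ∀ A ∈ 𝒜, IsOpen A) (i n : ℕ) {S : Set X}
    (hS : S ∈ refCoverAt f i n 𝒜) : IsOpen S := by
  obtain ⟨a, ha, rfl⟩ := hS
  exact (Set.finite_Iio n).isOpen_biInter fun k hk =>
    (h𝒜 _ (ha k hk)).preimage (itr_continuous hf i k)

lemma refCoverAt_cover {f : ℕ → X → X} {𝒜 : Set (Set X)} (h𝒜 : ⋃₀ 𝒜 = Set.univ)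
    (i n : ℕ) : ⋃₀ refCoverAt f i n 𝒜 = Set.univ := by
  apply Set.eq_univ_of_forall fun x => ?_
  have h : ∀ k, ∃ A ∈ 𝒜, itr f i k x ∈ A := fun k => by
    have : itr f i k x ∈ ⋃₀ 𝒜 := h𝒜.symm ▸ Set.mem_univ _
    simpa [Set.mem_sUnion] using this
  choose a ha hxa using h
  exact ⟨⋂ k < n, itr f i k ⁻¹' a k, ⟨a, fun k _ => ha k, rfl⟩,
    Set.mem_iInter₂.2 fun k _ => hxa k⟩

/-- The defining set of `coverN` is nonempty for an open cover of a compact space. -/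
lemma coverN_set_nonempty [TopologicalSpace X] [CompactSpace X] {𝒜 : Set (Set X)}
    (hopen : ∀ A ∈ 𝒜, IsOpen A) (hcov : ⋃₀ 𝒜 = Set.univ) :
    ∃ B : Finset (Set X), ↑B ⊆ 𝒜 ∧ ⋃₀ (↑B : Set (Set X)) = Set.univ ∧
      B.card = coverN 𝒜 := by
  have hsub : (Set.univ : Set X) ⊆ ⋃ A ∈ 𝒜, A := by
    rw [← Set.sUnion_eq_biUnion, hcov]
  obtain ⟨b', hb'sub, hb'fin, hb'cov⟩ :=
    isCompact_univ.elim_finite_subcover_image hopen hsub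
  have hmem : hb'fin.toFinset.card ∈
      {m | ∃ B : Finset (Set X), ↑B ⊆ 𝒜 ∧ ⋃₀ (↑B : Set (Set X)) = Set.univ ∧ B.card = m} := by
    refine ⟨hb'fin.toFinset, by simpa using hb'sub, ?_, rfl⟩
    apply Set.eq_univ_of_univ_subset
    rw [Set.sUnion_eq_biUnion]
    simpa using hb'cov
  have hne : {m | ∃ B : Finset (Set X), ↑B ⊆ 𝒜 ∧ ⋃₀ (↑B : Set (Set X)) = Set.univ ∧
      B.card = m}.Nonempty := ⟨_, hmem⟩
  obtain ⟨B, hB1, hB2, hB3⟩ := Nat.sInf_mem hne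
  exact ⟨B, hB1, hB2, hB3⟩

lemma one_le_coverN [Nonempty X] {𝒜 : Set (Set X)}
    (h : ∃ B : Finset (Set X), ↑B ⊆ 𝒜 ∧ ⋃₀ (↑B : Set (Set X)) = Set.univ ∧
      B.card = coverN 𝒜) : 1 ≤ coverN 𝒜 := by
  obtain ⟨B, _, hBcov, hBcard⟩ := h
  rcases Nat.eq_zero_or_pos (coverN 𝒜) with h0 | h1
  · rw [h0, Finset.card_eq_zero] at hBcard
    subst hBcard
    simp only [Finset.coe_empty, Set.sUnion_empty] at hBcov
    exact absurd hBcov.symm (Set.univ_nonempty (α := X)).ne_empty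
  · exact h1

lemma coverN_le_card {𝒜 : Set (Set X)} {B : Finset (Set X)} (h1 : ↑B ⊆ 𝒜)
    (h2 : ⋃₀ (↑B : Set (Set X)) = Set.univ) : coverN 𝒜 ≤ B.card :=
  Nat.sInf_le ⟨B, h1, h2, rfl⟩

lemma inter_preimage_mem_refCoverAt {f : ℕ → X → X} {𝒜 : Set (Set X)} {i m n : ℕ}
    {S₁ S₂ : Set X} (h1 : S₁ ∈ refCoverAt f i m 𝒜) (h2 : S₂ ∈ refCoverAt f (i + m) n 𝒜) :
    S₁ ∩ itr f i m ⁻¹' S₂ ∈ refCoverAt f i (m + n) 𝒜 := by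
  obtain ⟨a, ha, rfl⟩ := h1
  obtain ⟨c, hc, rfl⟩ := h2
  refine ⟨fun k => if k < m then a k else c (k - m), fun k hk => ?_, ?_⟩
  · by_cases h : k < m
    · simpa [h] using ha k h
    · simp only [h, if_false]
      exact hc (k - m) (by omega)
  · ext x
    simp only [Set.mem_inter_iff, Set.mem_iInter, Set.mem_preimage]
    constructor
    · rintro ⟨hA, hC⟩ k hk
      by_cases h : k < m
      · simpa [h] using hA k h
      · simp only [h, if_false]
        have hk' : k - m < n := by omega
        have := hC (k - m) hk'
        rwa [← itr_add f i m (k - m) x, Nat.add_sub_cancel' (by omega)] at this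
    · intro h
      refine ⟨fun k hk => by simpa [hk] using h k (by omega), fun k hk => ?_⟩
      rw [← itr_add f i m k x]
      have := h (m + k) (by omega)
      simpa [show ¬ m + k < m by omega] using this

lemma coverN_refCoverAt_le [TopologicalSpace X] [CompactSpace X] {f : ℕ → X → X}
    (hf : ∀ n, Continuous (f n)) {𝒜 : Set (Set X)} (hopen : ∀ A ∈ 𝒜, IsOpen A)
    (hcov : ⋃₀ 𝒜 = Set.univ) (i m n : ℕ) :
    coverN (refCoverAt f i (m + n) 𝒜) ≤
      coverN (refCoverAt f i m 𝒜) * coverN (refCoverAt f (i + m) n 𝒜) := by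
  obtain ⟨B₁, hB₁sub, hB₁cov, hB₁card⟩ :=
    coverN_set_nonempty (fun A hA => refCoverAt_isOpen hf hopen i m hA)
      (refCoverAt_cover hcov i m)
  obtain ⟨B₂, hB₂sub, hB₂cov, hB₂card⟩ :=
    coverN_set_nonempty (fun A hA => refCoverAt_isOpen hf hopen (i + m) n hA)
      (refCoverAt_cover hcov (i + m) n)
  classical
  set B : Finset (Set X) := (B₁ ×ˢ B₂).image fun p => p.1 ∩ itr f i m ⁻¹' p.2 with hB
  have hsub : ↑B ⊆ refCoverAt f i (m + n) 𝒜 := by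
    intro S hS
    simp only [hB, Finset.coe_image, Set.mem_image, Finset.mem_coe, Finset.mem_product] at hS
    obtain ⟨⟨S₁, S₂⟩, ⟨h1, h2⟩, rfl⟩ := hS
    exact inter_preimage_mem_refCoverAt (hB₁sub h1) (hB₂sub h2)
  have hcv : ⋃₀ (↑B : Set (Set X)) = Set.univ := by
    apply Set.eq_univ_of_forall fun x => ?_
    have hx1 : x ∈ ⋃₀ (↑B₁ : Set (Set X)) := hB₁cov.symm ▸ Set.mem_univ _
    have hx2 : itr f i m x ∈ ⋃₀ (↑B₂ : Set (Set X)) := hB₂cov.symm ▸ Set.mem_univ _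
    obtain ⟨S₁, hS₁, hxS₁⟩ := hx1
    obtain ⟨S₂, hS₂, hxS₂⟩ := hx2
    refine ⟨S₁ ∩ itr f i m ⁻¹' S₂, ?_, hxS₁, hxS₂⟩
    simp only [hB, Finset.coe_image, Set.mem_image, Finset.mem_coe, Finset.mem_product]
    exact ⟨(S₁, S₂), ⟨hS₁, hS₂⟩, rfl⟩
  calc coverN (refCoverAt f i (m + n) 𝒜) ≤ B.card := coverN_le_card hsub hcv
    _ ≤ (B₁ ×ˢ B₂).card := Finset.card_image_le
    _ = coverN (refCoverAt f i m 𝒜) * coverN (refCoverAt f (i + m) n 𝒜) := by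
        rw [Finset.card_product, hB₁card, hB₂card]

lemma coverEntropyOn_le_shift [TopologicalSpace X] [CompactSpace X] {f : ℕ → X → X}
    (hf : ∀ n, Continuous (f n)) {𝒜 : Set (Set X)} (hopen : ∀ A ∈ 𝒜, IsOpen A)
    (hcov : ⋃₀ 𝒜 = Set.univ) (i m : ℕ) :
    coverEntropyOn f i 𝒜 ≤ coverEntropyOn f (i + m) 𝒜 := by
  cases isEmpty_or_nonempty X with
  | inl hX =>
    have hz : ∀ i' n, coverN (refCoverAt f i' n 𝒜) = 0 := fun i' n =>
      Nat.le_zero.mp (le_trans (coverN_le_card (B := ∅) (by simp)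
        (by simp [Set.univ_eq_empty_iff.mpr hX])) (by simp))
    simp [coverEntropyOn, hz]
  | inr hX =>
    have hNone : ∀ i' n, 1 ≤ coverN (refCoverAt f i' n 𝒜) := fun i' n =>
      one_le_coverN (coverN_set_nonempty (fun A hA => refCoverAt_isOpen hf hopen i' n hA)
        (refCoverAt_cover hcov i' n))
    have hcastpos : ∀ i' n, (1 : ℝ) ≤ (coverN (refCoverAt f i' n 𝒜) : ℝ) := fun i' n => by
      exact_mod_cast hNone i' n
    set C : ℝ := Real.log (coverN (refCoverAt f i m 𝒜)) with hC
    let u : ℕ → ℝ := fun n => Real.log (coverN (refCoverAt f i n 𝒜)) / n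
    let w : ℕ → ℝ := fun n => Real.log (coverN (refCoverAt f (i + m) n 𝒜)) / n
    let v : ℕ → ℝ := fun n => C / ((n + m : ℕ) : ℝ)
    have hwnonneg : ∀ n, 0 ≤ w n := fun n =>
      div_nonneg (Real.log_nonneg (hcastpos _ n)) (Nat.cast_nonneg n)
    have key : ∀ n : ℕ, 1 ≤ n → u (n + m) ≤ v n + w n := by
      intro n hn
      have hmul := coverN_refCoverAt_le hf hopen hcov i m n
      have hlog : Real.log (coverN (refCoverAt f i (n + m) 𝒜)) ≤
          C + Real.log (coverN (refCoverAt f (i + m) n 𝒜)) := by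
        rw [add_comm n m]
        calc Real.log (coverN (refCoverAt f i (m + n) 𝒜))
            ≤ Real.log ((coverN (refCoverAt f i m 𝒜) * coverN (refCoverAt f (i + m) n 𝒜) : ℕ)) :=
              Real.log_le_log (by linarith [hcastpos i (m + n)]) (by exact_mod_cast hmul)
          _ = C + Real.log (coverN (refCoverAt f (i + m) n 𝒜)) := by
              push_cast
              rw [Real.log_mul (by linarith [hcastpos i m]) (by linarith [hcastpos (i + m) n])]
      have hn' : (0 : ℝ) < n := by exact_mod_cast hn
      have hnm : (0 : ℝ) < ((n + m : ℕ) : ℝ) := by positivity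
      have hwlog : 0 ≤ Real.log (coverN (refCoverAt f (i + m) n 𝒜)) :=
        Real.log_nonneg (hcastpos (i + m) n)
      calc u (n + m) = Real.log (coverN (refCoverAt f i (n + m) 𝒜)) / ((n + m : ℕ) : ℝ) := rfl
        _ ≤ (C + Real.log (coverN (refCoverAt f (i + m) n 𝒜))) / ((n + m : ℕ) : ℝ) := by
            gcongr
        _ = v n + Real.log (coverN (refCoverAt f (i + m) n 𝒜)) / ((n + m : ℕ) : ℝ) := by
            rw [add_div]
        _ ≤ v n + w n := by
            have hle : ((n : ℝ)) ≤ ((n + m : ℕ) : ℝ) := by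
              push_cast; linarith [Nat.cast_nonneg (α := ℝ) m]
            exact add_le_add (le_refl (v n)) (div_le_div_of_nonneg_left hwlog hn' hle)
    have step1 : coverEntropyOn f i 𝒜 =
        atTop.limsup fun n : ℕ => ((u (n + m) : ℝ) : EReal) :=
      (limsup_nat_add (fun n : ℕ => ((u n : ℝ) : EReal)) m).symm
    have step2 : (atTop.limsup fun n : ℕ => ((u (n + m) : ℝ) : EReal)) ≤
        atTop.limsup fun n : ℕ => (((v n : ℝ) : EReal) + ((w n : ℝ) : EReal)) := by
      apply limsup_le_limsup ?_ ?_ ?_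
      · filter_upwards [eventually_ge_atTop 1] with n hn
        rw [← EReal.coe_add]
        exact EReal.coe_le_coe_iff.2 (key n hn)
      · isBoundedDefault
      · isBoundedDefault
    have hv : Tendsto (fun n : ℕ => ((v n : ℝ) : EReal)) atTop (nhds ((0 : ℝ) : EReal)) := by
      apply EReal.tendsto_coe.2
      exact (tendsto_const_div_atTop_nhds_zero_nat C).comp (tendsto_add_atTop_nat m)
    have hlimsupv : atTop.limsup (fun n : ℕ => ((v n : ℝ) : EReal)) = ((0 : ℝ) : EReal) :=
      hv.limsup_eq
    have hlimsupw : ((0 : ℝ) : EReal) ≤ atTop.limsup fun n : ℕ => ((w n : ℝ) : EReal) := by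
      apply le_limsup_of_frequently_le ?_ ?_
      · exact Frequently.of_forall fun n => EReal.coe_le_coe_iff.2 (hwnonneg n)
      · isBoundedDefault
    have step3 : (atTop.limsup fun n : ℕ => (((v n : ℝ) : EReal) + ((w n : ℝ) : EReal))) ≤
        atTop.limsup fun n : ℕ => ((w n : ℝ) : EReal) := by
      have h := EReal.limsup_add_le (f := atTop) (u := fun n : ℕ => ((v n : ℝ) : EReal))
        (v := fun n : ℕ => ((w n : ℝ) : EReal))
        (Or.inl (by rw [hlimsupv]; exact EReal.coe_ne_bot 0))
        (Or.inl (by rw [hlimsupv]; exact EReal.coe_ne_top 0))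
      rw [hlimsupv] at h
      simpa [Pi.add_def] using h
    have hfin : (atTop.limsup fun n : ℕ => ((w n : ℝ) : EReal)) =
        coverEntropyOn f (i + m) 𝒜 := rfl
    calc coverEntropyOn f i 𝒜
        = atTop.limsup fun n : ℕ => ((u (n + m) : ℝ) : EReal) := step1
      _ ≤ atTop.limsup fun n : ℕ => (((v n : ℝ) : EReal) + ((w n : ℝ) : EReal)) := step2
      _ ≤ atTop.limsup fun n : ℕ => ((w n : ℝ) : EReal) := step3
      _ = coverEntropyOn f (i + m) 𝒜 := hfin

end Aux

/-- Discarding initial maps cannot decrease entropy: for `1 ≤ i ≤ j` and any open cover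
`𝒜`, `h(f_{i,∞}, 𝒜) ≤ h(f_{j,∞}, 𝒜)`, and hence `h(f_{i,∞}) ≤ h(f_{j,∞})`. -/
theorem coverEntropy_mono_shift {X : Type*} [TopologicalSpace X] [CompactSpace X]
    (f : ℕ → X → X) (hf : ∀ n, Continuous (f n)) (i j : ℕ) (hi : 1 ≤ i) (hij : i ≤ j) :
    (∀ 𝒜 : Set (Set X), (∀ A ∈ 𝒜, IsOpen A) → ⋃₀ 𝒜 = Set.univ →
        coverEntropyOn f i 𝒜 ≤ coverEntropyOn f j 𝒜) ∧
      coverEntropy f i ≤ coverEntropy f j := by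
  obtain ⟨m, rfl⟩ : ∃ m, j = i + m := ⟨j - i, by omega⟩
  refine ⟨fun 𝒜 hopen hcov => coverEntropyOn_le_shift hf hopen hcov i m, ?_⟩
  exact iSup₂_le fun 𝒜 h𝒜 =>
    le_iSup₂_of_le 𝒜 h𝒜 (coverEntropyOn_le_shift hf h𝒜.1 h𝒜.2 i m)
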